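/- Let (Ω, μ) be a measure space and let p_A, p_B : Ω → ℝ be measurable, strictly positive μ-almost everywhere, with ∫ p_A dμ = ∫ p_B dμ = 1. Set F*(x) = log p_A(x) − log p_B(x), and let F : Ω → ℝ be measurable with logistic classification loss L(F) < ∞. If L(F) = L(F*), then F = F* μ-almost everywhere. -/

import Mathlib

open MeasureTheory
open scoped ENNReal

/-- The logistic sigmoid `σ(u) = 1 / (1 + exp (-u))`. -/
noncomputable def sigmoid (u : ℝ) : ℝ := 1 / (1 + Real.exp (-u))

/-- The logistic classification loss
`L(F) = −∫ p_A log σ(F) dμ − ∫ p_B log (1 − σ(F)) dμ`, valued in `[0, ∞]`. -/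
noncomputable def logisticLoss {Ω : Type*} [MeasurableSpace Ω] (μ : Measure Ω)
    (pA pB F : Ω → ℝ) : ℝ≥0∞ :=
  (∫⁻ x, ENNReal.ofReal (-(pA x * Real.log (sigmoid (F x)))) ∂μ)
    + ∫⁻ x, ENNReal.ofReal (-(pB x * Real.log (1 - sigmoid (F x)))) ∂μ

lemma sigmoid_pos (u : ℝ) : 0 < sigmoid u := by unfold sigmoid; positivity

lemma sigmoid_lt_one (u : ℝ) : sigmoid u < 1 := by
  unfold sigmoid
  rw [div_lt_one (by positivity)]
  linarith [Real.exp_pos (-u)]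

lemma sigmoid_strictMono : StrictMono sigmoid := by
  intro u v huv
  unfold sigmoid
  apply one_div_lt_one_div_of_lt (by positivity)
  have := Real.exp_lt_exp.mpr (neg_lt_neg huv)
  linarith

lemma sigmoid_log_div (a b : ℝ) (ha : 0 < a) (hb : 0 < b) :
    sigmoid (Real.log a - Real.log b) = a / (a + b) := by
  unfold sigmoid
  rw [neg_sub, ← Real.log_div hb.ne' ha.ne', Real.exp_log (by positivity)]
  field_simp

lemma continuous_sigmoid' : Continuous sigmoid :=
  continuous_const.div (continuous_const.add (Real.continuous_exp.comp continuous_neg))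
    (fun x => by positivity)

lemma term1_nonneg {a : ℝ} (ha : 0 ≤ a) (u : ℝ) :
    0 ≤ -(a * Real.log (sigmoid u)) :=
  neg_nonneg.mpr (mul_nonpos_of_nonneg_of_nonpos ha
    (Real.log_nonpos (sigmoid_pos u).le (sigmoid_lt_one u).le))

lemma term2_nonneg {b : ℝ} (hb : 0 ≤ b) (u : ℝ) :
    0 ≤ -(b * Real.log (1 - sigmoid u)) :=
  neg_nonneg.mpr (mul_nonpos_of_nonneg_of_nonpos hb
    (Real.log_nonpos (by linarith [sigmoid_lt_one u]) (by linarith [sigmoid_pos u])))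

lemma key_lt (a b u : ℝ) (ha : 0 < a) (hb : 0 < b)
    (hne : u ≠ Real.log a - Real.log b) :
    -(a * Real.log (sigmoid (Real.log a - Real.log b)))
      + -(b * Real.log (1 - sigmoid (Real.log a - Real.log b)))
      < -(a * Real.log (sigmoid u)) + -(b * Real.log (1 - sigmoid u)) := by
  set s := sigmoid u with hs
  have hs0 : 0 < s := sigmoid_pos u
  have hs1 : s < 1 := sigmoid_lt_one u
  rw [sigmoid_log_div a b ha hb]
  set t := a / (a + b) with ht
  have ht0 : 0 < t := by positivity
  have ht1 : t < 1 := by rw [ht, div_lt_one (by positivity)]; linarith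
  have hst : s ≠ t := by
    intro h
    apply hne
    apply sigmoid_strictMono.injective
    rw [show sigmoid u = s from rfl, h, sigmoid_log_div a b ha hb]
  have h1 : Real.log (s / t) < s / t - 1 :=
    Real.log_lt_sub_one_of_pos (by positivity) (by
      rw [ne_eq, div_eq_one_iff_eq ht0.ne']; exact hst)
  have h2 : Real.log ((1 - s) / (1 - t)) < (1 - s) / (1 - t) - 1 :=
    Real.log_lt_sub_one_of_pos (div_pos (by linarith) (by linarith)) (by
      rw [ne_eq, div_eq_one_iff_eq (by linarith : (1:ℝ) - t ≠ 0)]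
      intro h; apply hst; linarith)
  rw [Real.log_div hs0.ne' ht0.ne'] at h1
  rw [Real.log_div (by linarith : (1:ℝ) - s ≠ 0) (by linarith : (1:ℝ) - t ≠ 0)] at h2
  have hat : a / t = a + b := by rw [ht]; field_simp
  have hbt : b / (1 - t) = a + b := by
    rw [ht]
    have : 1 - a / (a + b) = b / (a + b) := by field_simp; ring
    rw [this]; field_simp
  have e1 : a * (s / t - 1) = (a + b) * s - a := by
    have : a * (s / t) = (a / t) * s := by ring
    rw [mul_sub, this, hat]; ring
  have e2 : b * ((1 - s) / (1 - t) - 1) = (a + b) * (1 - s) - b := by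
    have : b * ((1 - s) / (1 - t)) = (b / (1 - t)) * (1 - s) := by ring
    rw [mul_sub, this, hbt]; ring
  have c1 : a * (Real.log s - Real.log t) < (a + b) * s - a := by
    calc a * (Real.log s - Real.log t) < a * (s / t - 1) := (mul_lt_mul_iff_right₀ ha).mpr h1
      _ = (a + b) * s - a := e1
  have c2 : b * (Real.log (1 - s) - Real.log (1 - t)) < (a + b) * (1 - s) - b := by
    calc b * (Real.log (1 - s) - Real.log (1 - t)) < b * ((1 - s) / (1 - t) - 1) :=
          (mul_lt_mul_iff_right₀ hb).mpr h2
      _ = (a + b) * (1 - s) - b := e2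
  nlinarith [c1, c2]

lemma key_le (a b u : ℝ) (ha : 0 < a) (hb : 0 < b) :
    -(a * Real.log (sigmoid (Real.log a - Real.log b)))
      + -(b * Real.log (1 - sigmoid (Real.log a - Real.log b)))
      ≤ -(a * Real.log (sigmoid u)) + -(b * Real.log (1 - sigmoid u)) := by
  rcases eq_or_ne u (Real.log a - Real.log b) with h | h
  · rw [h]
  · exact le_of_lt (key_lt a b u ha hb h)

lemma loss_eq_lintegral {Ω : Type*} [MeasurableSpace Ω] (μ : Measure Ω)
    (pA pB G : Ω → ℝ) (hpA : Measurable pA) (hpB : Measurable pB)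
    (hG : Measurable G)
    (hpApos : ∀ᵐ x ∂μ, 0 ≤ pA x) (hpBpos : ∀ᵐ x ∂μ, 0 ≤ pB x) :
    logisticLoss μ pA pB G
      = ∫⁻ x, ENNReal.ofReal (-(pA x * Real.log (sigmoid (G x)))
          + -(pB x * Real.log (1 - sigmoid (G x)))) ∂μ := by
  have m1 : Measurable fun x => ENNReal.ofReal (-(pA x * Real.log (sigmoid (G x)))) :=
    ((hpA.mul (Real.measurable_log.comp (continuous_sigmoid'.measurable.comp hG))).neg).ennreal_ofReal
  unfold logisticLoss
  rw [← lintegral_add_left m1]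
  refine lintegral_congr_ae ?_
  filter_upwards [hpApos, hpBpos] with x hA hB
  rw [ENNReal.ofReal_add (term1_nonneg hA (G x)) (term2_nonneg hB (G x))]

/-- If a measurable `F` with finite logistic loss attains the same loss as the
optimal classifier `F* = log p_A − log p_B`, then `F = F*` μ-almost everywhere. -/
theorem eq_optimal_of_logisticLoss_eq
    {Ω : Type*} [MeasurableSpace Ω] (μ : Measure Ω)
    (pA pB : Ω → ℝ) (hpA : Measurable pA) (hpB : Measurable pB)
    (hpApos : ∀ᵐ x ∂μ, 0 < pA x) (hpBpos : ∀ᵐ x ∂μ, 0 < pB x)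
    (hpAint : ∫ x, pA x ∂μ = 1) (hpBint : ∫ x, pB x ∂μ = 1)
    (F : Ω → ℝ) (hF : Measurable F)
    (hfin : logisticLoss μ pA pB F < ∞)
    (heq : logisticLoss μ pA pB F
      = logisticLoss μ pA pB (fun x => Real.log (pA x) - Real.log (pB x))) :
    F =ᵐ[μ] fun x => Real.log (pA x) - Real.log (pB x) := by
  set Fs : Ω → ℝ := fun x => Real.log (pA x) - Real.log (pB x) with hFs
  have hFsm : Measurable Fs :=
    (Real.measurable_log.comp hpA).sub (Real.measurable_log.comp hpB)
  set G : Ω → ℝ := fun x =>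
    -(pA x * Real.log (sigmoid (F x))) + -(pB x * Real.log (1 - sigmoid (F x))) with hGdef
  set Gs : Ω → ℝ := fun x =>
    -(pA x * Real.log (sigmoid (Fs x))) + -(pB x * Real.log (1 - sigmoid (Fs x))) with hGsdef
  have measTerm : ∀ (H : Ω → ℝ), Measurable H → Measurable fun x =>
      -(pA x * Real.log (sigmoid (H x))) + -(pB x * Real.log (1 - sigmoid (H x))) := by
    intro H hH
    exact ((hpA.mul (Real.measurable_log.comp
        (continuous_sigmoid'.measurable.comp hH))).neg).add
      ((hpB.mul (Real.measurable_log.comp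
        ((measurable_const.sub (continuous_sigmoid'.measurable.comp hH))))).neg)
  have hGm : Measurable G := measTerm F hF
  have hGsm : Measurable Gs := measTerm Fs hFsm
  have hA' : ∀ᵐ x ∂μ, 0 ≤ pA x := hpApos.mono fun x h => h.le
  have hB' : ∀ᵐ x ∂μ, 0 ≤ pB x := hpBpos.mono fun x h => h.le
  have hlossF : logisticLoss μ pA pB F = ∫⁻ x, ENNReal.ofReal (G x) ∂μ :=
    loss_eq_lintegral μ pA pB F hpA hpB hF hA' hB'
  have hlossFs : logisticLoss μ pA pB Fs = ∫⁻ x, ENNReal.ofReal (Gs x) ∂μ :=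
    loss_eq_lintegral μ pA pB Fs hpA hpB hFsm hA' hB'
  have heq' : ∫⁻ x, ENNReal.ofReal (G x) ∂μ = ∫⁻ x, ENNReal.ofReal (Gs x) ∂μ := by
    rw [← hlossF, ← hlossFs]; exact heq
  have hfin' : ∫⁻ x, ENNReal.ofReal (G x) ∂μ ≠ ∞ := by
    rw [← hlossF]; exact hfin.ne
  have hfinGs : ∫⁻ x, ENNReal.ofReal (Gs x) ∂μ ≠ ∞ := by rw [← heq']; exact hfin'
  have hle : ∀ᵐ x ∂μ, Gs x ≤ G x := by
    filter_upwards [hpApos, hpBpos] with x hAx hBx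
    exact key_le (pA x) (pB x) (F x) hAx hBx
  have hleE : (fun x => ENNReal.ofReal (Gs x)) ≤ᵐ[μ] fun x => ENNReal.ofReal (G x) := by
    filter_upwards [hle] with x h using ENNReal.ofReal_le_ofReal h
  have hsub : ∫⁻ x, (ENNReal.ofReal (G x) - ENNReal.ofReal (Gs x)) ∂μ = 0 := by
    rw [lintegral_sub hGsm.ennreal_ofReal hfinGs hleE, heq', tsub_self]
  have hzero : (fun x => ENNReal.ofReal (G x) - ENNReal.ofReal (Gs x)) =ᵐ[μ] 0 :=
    (lintegral_eq_zero_iff (hGm.ennreal_ofReal.sub hGsm.ennreal_ofReal)).mp hsub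
  have hGsnn : ∀ᵐ x ∂μ, 0 ≤ Gs x := by
    filter_upwards [hA', hB'] with x hAx hBx
    exact add_nonneg (term1_nonneg hAx _) (term2_nonneg hBx _)
  filter_upwards [hzero, hle, hpApos, hpBpos, hGsnn] with x h0 hlex hAx hBx hnn
  have hle2 : ENNReal.ofReal (G x) ≤ ENNReal.ofReal (Gs x) :=
    tsub_eq_zero_iff_le.mp h0
  have hGle : G x ≤ Gs x := (ENNReal.ofReal_le_ofReal_iff hnn).mp hle2
  have hGeq : G x = Gs x := le_antisymm hGle hlex
  by_contra hne
  exact absurd hGeq (ne_of_gt (by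
    simpa [hGdef, hGsdef] using key_lt (pA x) (pB x) (F x) hAx hBx hne))
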